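/- (Symmetric Rado theorem) Let A be an n×n real symmetric matrix whose characteristic polynomial equals ∏_{i=1}^n (X − λ_i). Let x_1, …, x_r be an orthonormal set of eigenvectors of A with A·X = X·Ω, where X = [x_1 | … | x_r] is the n×r matrix with these columns (so XᵀX = I_r) and Ω = diag(λ_1, …, λ_r). Let C be any r×r real symmetric matrix. Then A + X·C·Xᵀ is symmetric and its characteristic polynomial equals the characteristic polynomial of Ω + C multiplied by ∏_{i=r+1}^n (X − λ_i); that is, A + X·C·Xᵀ has eigenvalues μ_1, …, μ_r, λ_{r+1}, …, λ_n, where μ_1, …, μ_r are the eigenvalues of Ω + C. -/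

import Mathlib

open Polynomial Matrix Finset

private lemma key_det {K : Type*} [Field K] {n r : ℕ}
    (M : Matrix (Fin n) (Fin n) K) (N Cc : Matrix (Fin r) (Fin r) K)
    (Xx : Matrix (Fin n) (Fin r) K) (horth : Xxᵀ * Xx = 1)
    (hMX : M * Xx = Xx * N) (hM : IsUnit M.det) (hN : IsUnit N.det) :
    (M - Xx * Cc * Xxᵀ).det * N.det = M.det * (N - Cc).det := by
  have hNdet : N.det ≠ 0 := by
    intro h; rw [h] at hN; exact hN.ne_zero rfl
  have hMinvX : M⁻¹ * Xx = Xx * N⁻¹ := by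
    have h1 : Xx = M⁻¹ * (Xx * N) := by
      rw [← hMX, ← Matrix.mul_assoc, Matrix.nonsing_inv_mul _ hM, Matrix.one_mul]
    calc M⁻¹ * Xx = M⁻¹ * (Xx * N) * N⁻¹ := by
          rw [Matrix.mul_assoc (M⁻¹), Matrix.mul_assoc, Matrix.mul_nonsing_inv _ hN,
            Matrix.mul_one]
      _ = Xx * N⁻¹ := by rw [← h1]
  have hfac : M - Xx * Cc * Xxᵀ = M * (1 - M⁻¹ * (Xx * Cc * Xxᵀ)) := by
    rw [Matrix.mul_sub, Matrix.mul_one, ← Matrix.mul_assoc, Matrix.mul_nonsing_inv _ hM,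
      Matrix.one_mul]
  have hrw : M⁻¹ * (Xx * Cc * Xxᵀ) = Xx * (N⁻¹ * Cc * Xxᵀ) := by
    rw [Matrix.mul_assoc Xx Cc, ← Matrix.mul_assoc, hMinvX, Matrix.mul_assoc,
      ← Matrix.mul_assoc N⁻¹]
  have hsmall : (1 - M⁻¹ * (Xx * Cc * Xxᵀ)).det = (1 - N⁻¹ * Cc).det := by
    rw [hrw, Matrix.det_one_sub_mul_comm, Matrix.mul_assoc, Matrix.mul_assoc, horth,
      Matrix.mul_one]
  have h2 : 1 - N⁻¹ * Cc = N⁻¹ * (N - Cc) := by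
    rw [Matrix.mul_sub, Matrix.nonsing_inv_mul _ hN]
  rw [hfac, Matrix.det_mul, hsmall, h2, Matrix.det_mul, Matrix.det_nonsing_inv]
  rw [Ring.inverse_eq_inv]
  field_simp

private lemma map_charmatrix {R S : Type*} [CommRing R] [CommRing S] {m : ℕ}
    (f : R[X] →+* S) (A : Matrix (Fin m) (Fin m) R) :
    (charmatrix A).map f = f X • (1 : Matrix (Fin m) (Fin m) S)
      - A.map (f.comp Polynomial.C) := by
  ext i j
  by_cases h : i = j <;>
    simp [charmatrix_apply, h, Matrix.one_apply, Matrix.diagonal_apply]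

private lemma key_charpoly {n r : ℕ} (A : Matrix (Fin n) (Fin n) ℝ)
    (Ω Cm : Matrix (Fin r) (Fin r) ℝ) (Xm : Matrix (Fin n) (Fin r) ℝ)
    (horth : Xmᵀ * Xm = 1) (hAX : A * Xm = Xm * Ω) :
    (A + Xm * Cm * Xmᵀ).charpoly * Ω.charpoly = A.charpoly * (Ω + Cm).charpoly := by
  set K := FractionRing ℝ[X]
  set φ : ℝ[X] →+* K := algebraMap ℝ[X] K with hφ
  have hinj : Function.Injective φ := IsFractionRing.injective ℝ[X] K
  apply hinj
  set ψ : ℝ →+* K := φ.comp Polynomial.C with hψ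
  set t : K := φ X with ht
  set M : Matrix (Fin n) (Fin n) K := t • 1 - A.map ψ with hM
  set N : Matrix (Fin r) (Fin r) K := t • 1 - Ω.map ψ with hN
  set Xx : Matrix (Fin n) (Fin r) K := Xm.map ψ with hXx
  set Cc : Matrix (Fin r) (Fin r) K := Cm.map ψ with hCc
  have hmapone : ∀ k : ℕ, (1 : Matrix (Fin k) (Fin k) ℝ).map ψ = 1 := fun k =>
    Matrix.map_one ψ ψ.map_zero ψ.map_one
  have hch : ∀ (k : ℕ) (B : Matrix (Fin k) (Fin k) ℝ),
      φ B.charpoly = (t • (1 : Matrix (Fin k) (Fin k) K) - B.map ψ).det := by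
    intro k B
    rw [Matrix.charpoly, RingHom.map_det, RingHom.mapMatrix_apply, map_charmatrix]
  have horth' : Xxᵀ * Xx = 1 := by
    rw [hXx, ← Matrix.transpose_map, ← Matrix.map_mul, horth, hmapone]
  have hMX : M * Xx = Xx * N := by
    rw [hM, hN, Matrix.sub_mul, Matrix.mul_sub, Matrix.smul_mul, Matrix.one_mul,
      Matrix.mul_smul, Matrix.mul_one, ← Matrix.map_mul, ← Matrix.map_mul, hAX]
  have hchA : φ A.charpoly = M.det := hch n A
  have hchΩ : φ Ω.charpoly = N.det := hch r Ω
  have hchAX : φ (A + Xm * Cm * Xmᵀ).charpoly = (M - Xx * Cc * Xxᵀ).det := by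
    rw [hch n (A + Xm * Cm * Xmᵀ)]
    congr 1
    rw [Matrix.map_add ⇑ψ (fun a b => map_add ψ a b) A (Xm * Cm * Xmᵀ), Matrix.map_mul, Matrix.map_mul, Matrix.transpose_map]
    rw [hM]
    abel
  have hchΩC : φ (Ω + Cm).charpoly = (N - Cc).det := by
    rw [hch r (Ω + Cm)]
    congr 1
    rw [Matrix.map_add ⇑ψ (fun a b => map_add ψ a b) Ω Cm, hN]
    abel
  have hMunit : IsUnit M.det := by
    rw [← hchA, isUnit_iff_ne_zero]
    exact fun h => (Matrix.charpoly_monic A).ne_zero (hinj (by simpa using h))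
  have hNunit : IsUnit N.det := by
    rw [← hchΩ, isUnit_iff_ne_zero]
    exact fun h => (Matrix.charpoly_monic Ω).ne_zero (hinj (by simpa using h))
  rw [_root_.map_mul, _root_.map_mul, hchA, hchΩ, hchAX, hchΩC]
  exact key_det M N Cc Xx horth' hMX hMunit hNunit

private lemma charpoly_diagonal' {r : ℕ} (d : Fin r → ℝ) :
    (Matrix.diagonal d).charpoly = ∏ i, (X - C (d i)) := by
  have : charmatrix (Matrix.diagonal d) = Matrix.diagonal (fun i => X - C (d i)) := by
    ext i j
    by_cases h : i = j <;> simp [charmatrix_apply, Matrix.diagonal_apply, h]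
  rw [Matrix.charpoly, this, Matrix.det_diagonal]

/-- **Symmetric Rado theorem.** If `Xm` has orthonormal columns which are eigenvectors
of the real symmetric matrix `A` for the eigenvalues `λ_1, …, λ_r`, and `Cm` is any
real symmetric `r × r` matrix, then `A + Xm·Cm·Xmᵀ` is symmetric with eigenvalues
`μ_1, …, μ_r, λ_{r+1}, …, λ_n`, where `μ_1, …, μ_r` are the eigenvalues of `Ω + Cm`
with `Ω = diag(λ_1, …, λ_r)`. -/
theorem sym_rado (n r : ℕ) (hr : r ≤ n) (A : Matrix (Fin n) (Fin n) ℝ)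
    (hsym : A.IsSymm) (l : Fin n → ℝ)
    (hA : A.charpoly = ∏ i, (X - C (l i)))
    (Xm : Matrix (Fin n) (Fin r) ℝ) (horth : Xmᵀ * Xm = 1)
    (hAX : A * Xm = Xm * Matrix.diagonal (fun i : Fin r => l (Fin.castLE hr i)))
    (Cm : Matrix (Fin r) (Fin r) ℝ) (hCsym : Cm.IsSymm) :
    (A + Xm * Cm * Xmᵀ).IsSymm ∧
    (A + Xm * Cm * Xmᵀ).charpoly =
      (Matrix.diagonal (fun i : Fin r => l (Fin.castLE hr i)) + Cm).charpoly *
        ∏ i ∈ univ.filter (fun i : Fin n => r ≤ (i : ℕ)), (X - C (l i)) := by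
  set Ω := Matrix.diagonal (fun i : Fin r => l (Fin.castLE hr i)) with hΩ
  constructor
  · unfold Matrix.IsSymm
    rw [Matrix.transpose_add, Matrix.transpose_mul, Matrix.transpose_mul,
      Matrix.transpose_transpose, hsym, hCsym.eq, Matrix.mul_assoc]
  · have key := key_charpoly A Ω Cm Xm horth hAX
    have hfilter : univ.filter (fun i : Fin n => (i : ℕ) < r)
        = (univ : Finset (Fin r)).map (Fin.castLEEmb hr) := by
      ext i
      simp only [mem_filter, mem_univ, true_and, Finset.mem_map]
      constructor
      · intro h
        exact ⟨⟨(i : ℕ), h⟩, Fin.ext rfl⟩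
      · rintro ⟨j, rfl⟩
        simp [Fin.castLEEmb]
    have hΩc : Ω.charpoly = ∏ i ∈ univ.filter (fun i : Fin n => (i : ℕ) < r),
        (X - C (l i)) := by
      rw [hΩ, charpoly_diagonal' (fun i : Fin r => l (Fin.castLE hr i)), hfilter,
        Finset.prod_map]
      rfl
    have hsplit : A.charpoly = Ω.charpoly *
        ∏ i ∈ univ.filter (fun i : Fin n => r ≤ (i : ℕ)), (X - C (l i)) := by
      rw [hA, hΩc, ← Finset.prod_filter_mul_prod_filter_not univ
        (fun i : Fin n => (i : ℕ) < r)]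
      congr 1
      apply Finset.prod_congr _ (fun _ _ => rfl)
      ext i
      simp [not_lt]
    have hΩne : Ω.charpoly ≠ 0 := (Matrix.charpoly_monic Ω).ne_zero
    apply mul_right_cancel₀ hΩne
    rw [key, hsplit]
    ring
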